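/- Let G be a finite abelian group of order q, H a subgroup of G, M a maximal proper subgroup of H, q̄ = |H|/|M|, T_H a transversal of H in G with fixed t_H ∈ T_H, T_M a transversal of M in H, and W̄ the induced channel on the cosets {t_H + t_M + M : t_M ∈ T_M}. For d ∈ H, define D_d(W̄) = (1/(2q̄))·Σ_{t_M∈T_M} Σ_{y∈Y} | W̄(y | t_H + t_M + M) − W̄(y | t_H + t_M + d + M) |, where t_H + t_M + d + M denotes the coset of M (within t_H + H) containing t_H + t_M + d. Then D_d(W̄) ≤ (2q / (q̄·|M|))·D_d(W). -/

import Mathlib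

open Finset

/-- `D_d(W) = (1/(2q))·Σ_{x∈G} Σ_{y∈Y} |W(y|x) − W(y|x+d)|`. -/
noncomputable def Dd {G Y : Type} [Fintype G] [Fintype Y] [Add G]
    (W : G → Y → ℝ) (d : G) : ℝ :=
  (1 / (2 * (Fintype.card G : ℝ))) * ∑ x : G, ∑ y : Y, |W x y - W (x + d) y|

/-- The induced channel `W̄` on cosets of `M` inside the coset `t_H + H`:
`W̄(y | t_H + t + M) = (1/|M|)·Σ_{m∈M} W(y | t_H + t + m)`. -/
noncomputable def inducedChannel {G Y : Type} [Fintype G] [AddCommGroup G] [DecidableEq G]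
    (W : G → Y → ℝ) (tH : G) (M : AddSubgroup G) [DecidablePred (· ∈ M)] :
    G → Y → ℝ :=
  fun t y => (1 / (Nat.card M : ℝ)) *
    ∑ m ∈ Finset.univ.filter (fun m : G => m ∈ M), W (tH + t + m) y

/-- `D_d(W̄) ≤ (2q/(q̄·|M|))·D_d(W)` for the induced channel `W̄`,
where `ρ` picks the representative in `T_M` of the coset of `M` (within `H`)
containing its argument. -/
theorem Dd_inducedChannel_le
    {G Y : Type} [Fintype G] [AddCommGroup G] [DecidableEq G] [Fintype Y]
    (W : G → Y → ℝ) (hW0 : ∀ x y, 0 ≤ W x y) (hW1 : ∀ x, ∑ y, W x y = 1)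
    (H M : AddSubgroup G) [DecidablePred (· ∈ M)]
    (hMH : M < H)
    (hMmax : ∀ K : AddSubgroup G, M ≤ K → K ≤ H → K = M ∨ K = H)
    (TH : Finset G) (hTH : ∀ g : G, ∃! t, t ∈ TH ∧ g - t ∈ H) (tH : G) (htH : tH ∈ TH)
    (TM : Finset G) (hTMsub : (TM : Set G) ⊆ (H : Set G))
    (hTM : ∀ h ∈ H, ∃! t, t ∈ TM ∧ h - t ∈ M)
    (ρ : G → G) (hρ : ∀ h ∈ H, ρ h ∈ TM ∧ h - ρ h ∈ M)
    (d : G) (hd : d ∈ H) :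
    (1 / (2 * ((Nat.card H : ℝ) / (Nat.card M : ℝ)))) *
        ∑ t ∈ TM, ∑ y : Y,
          |inducedChannel W tH M t y - inducedChannel W tH M (ρ (t + d)) y| ≤
      (2 * (Fintype.card G : ℝ) /
          (((Nat.card H : ℝ) / (Nat.card M : ℝ)) * (Nat.card M : ℝ))) * Dd W d := by
  have hMpos : (0:ℝ) < (Nat.card M : ℝ) := by exact_mod_cast Nat.card_pos
  have hHpos : (0:ℝ) < (Nat.card H : ℝ) := by exact_mod_cast Nat.card_pos
  have hGpos : (0:ℝ) < (Fintype.card G : ℝ) := by exact_mod_cast Fintype.card_pos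
  simp only [Dd]
  set S : ℝ := ∑ x : G, ∑ y : Y, |W x y - W (x + d) y| with hS
  have hS0 : 0 ≤ S := by
    rw [hS]
    exact Finset.sum_nonneg fun x _ => Finset.sum_nonneg fun y _ => abs_nonneg _
  set Mf : Finset G := Finset.univ.filter (fun m : G => m ∈ M) with hMf
  have hMemMf : ∀ m : G, m ∈ Mf ↔ m ∈ M := by
    intro m; simp [hMf]
  have step1 : ∀ t ∈ TM, ∀ y : Y,
      inducedChannel W tH M (ρ (t + d)) y
        = (1 / (Nat.card M : ℝ)) * ∑ m ∈ Mf, W (tH + t + m + d) y := by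
    intro t ht y
    have htH : t ∈ H := hTMsub ht
    have htdH : t + d ∈ H := H.add_mem htH hd
    obtain ⟨hρ1, hρ2⟩ := hρ (t + d) htdH
    show (1 / (Nat.card M : ℝ)) * ∑ m ∈ Mf, W (tH + ρ (t + d) + m) y = _
    congr 1
    refine Finset.sum_nbij' (fun m => m - ((t + d) - ρ (t + d)))
      (fun m => m + ((t + d) - ρ (t + d))) ?_ ?_ ?_ ?_ ?_
    · intro m hm
      rw [hMemMf] at hm ⊢
      exact M.sub_mem hm hρ2
    · intro m hm
      rw [hMemMf] at hm ⊢
      exact M.add_mem hm hρ2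
    · intro m _; simp
    · intro m _; simp
    · intro m _; congr 1; abel
  have step2 : ∀ t ∈ TM,
      ∑ y : Y, |inducedChannel W tH M t y - inducedChannel W tH M (ρ (t + d)) y|
        ≤ (1 / (Nat.card M : ℝ)) *
            ∑ m ∈ Mf, ∑ y : Y, |W (tH + t + m) y - W (tH + t + m + d) y| := by
    intro t ht
    have hptwise : ∀ y : Y,
        |inducedChannel W tH M t y - inducedChannel W tH M (ρ (t + d)) y|
          ≤ (1 / (Nat.card M : ℝ)) *
              ∑ m ∈ Mf, |W (tH + t + m) y - W (tH + t + m + d) y| := by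
      intro y
      rw [step1 t ht y]
      show |(1 / (Nat.card M : ℝ)) * ∑ m ∈ Mf, W (tH + t + m) y
            - (1 / (Nat.card M : ℝ)) * ∑ m ∈ Mf, W (tH + t + m + d) y| ≤ _
      rw [← mul_sub, ← Finset.sum_sub_distrib, abs_mul,
        abs_of_pos (by positivity : (0:ℝ) < 1 / (Nat.card M : ℝ))]
      exact mul_le_mul_of_nonneg_left (Finset.abs_sum_le_sum_abs _ _) (by positivity)
    calc ∑ y : Y, |inducedChannel W tH M t y - inducedChannel W tH M (ρ (t + d)) y|
        ≤ ∑ y : Y, (1 / (Nat.card M : ℝ)) *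
            ∑ m ∈ Mf, |W (tH + t + m) y - W (tH + t + m + d) y| :=
          Finset.sum_le_sum fun y _ => hptwise y
      _ = (1 / (Nat.card M : ℝ)) *
            ∑ m ∈ Mf, ∑ y : Y, |W (tH + t + m) y - W (tH + t + m + d) y| := by
          rw [← Finset.mul_sum, Finset.sum_comm]
  have step3 : ∑ t ∈ TM, ∑ m ∈ Mf, ∑ y : Y,
      |W (tH + t + m) y - W (tH + t + m + d) y| ≤ S := by
    rw [← Finset.sum_product']
    have hinj : ∀ p ∈ TM ×ˢ Mf, ∀ q ∈ TM ×ˢ Mf,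
        tH + p.1 + p.2 = tH + q.1 + q.2 → p = q := by
      rintro ⟨t1, m1⟩ hp ⟨t2, m2⟩ hq heq
      rw [Finset.mem_product] at hp hq
      obtain ⟨ht1, hm1⟩ := hp
      obtain ⟨ht2, hm2⟩ := hq
      rw [hMemMf] at hm1 hm2
      have heq' : t1 + m1 = t2 + m2 := by
        have := heq
        simp only [add_assoc] at this
        exact add_left_cancel this
      have hh : t1 + m1 ∈ H := H.add_mem (hTMsub ht1) (hMH.le hm1)
      obtain ⟨u, -, huniq⟩ := hTM (t1 + m1) hh
      have e1 : t1 = u := huniq t1 ⟨ht1, by simpa using hm1⟩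
      have e2 : t2 = u := huniq t2 ⟨ht2, by rw [heq']; simpa using hm2⟩
      have et : t1 = t2 := e1.trans e2.symm
      subst et
      have : m1 = m2 := add_left_cancel heq'
      simp [this]
    calc ∑ p ∈ TM ×ˢ Mf, ∑ y : Y, |W (tH + p.1 + p.2) y - W (tH + p.1 + p.2 + d) y|
        = ∑ x ∈ (TM ×ˢ Mf).image (fun p : G × G => tH + p.1 + p.2),
            ∑ y : Y, |W x y - W (x + d) y| :=
          (Finset.sum_image (f := fun x => ∑ y : Y, |W x y - W (x + d) y|) hinj).symm
      _ ≤ ∑ x : G, ∑ y : Y, |W x y - W (x + d) y| :=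
          Finset.sum_le_sum_of_subset_of_nonneg (Finset.subset_univ _)
            (fun x _ _ => Finset.sum_nonneg fun y _ => abs_nonneg _)
      _ = S := hS.symm
  have main : ∑ t ∈ TM, ∑ y : Y,
      |inducedChannel W tH M t y - inducedChannel W tH M (ρ (t + d)) y|
        ≤ (1 / (Nat.card M : ℝ)) * S := by
    calc ∑ t ∈ TM, ∑ y : Y,
        |inducedChannel W tH M t y - inducedChannel W tH M (ρ (t + d)) y|
        ≤ ∑ t ∈ TM, (1 / (Nat.card M : ℝ)) *
            ∑ m ∈ Mf, ∑ y : Y, |W (tH + t + m) y - W (tH + t + m + d) y| :=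
          Finset.sum_le_sum step2
      _ = (1 / (Nat.card M : ℝ)) * ∑ t ∈ TM, ∑ m ∈ Mf, ∑ y : Y,
            |W (tH + t + m) y - W (tH + t + m + d) y| := (Finset.mul_sum _ _ _).symm
      _ ≤ (1 / (Nat.card M : ℝ)) * S :=
          mul_le_mul_of_nonneg_left step3 (by positivity)
  have hqb : (0:ℝ) < (Nat.card H : ℝ) / (Nat.card M : ℝ) := div_pos hHpos hMpos
  calc (1 / (2 * ((Nat.card H : ℝ) / (Nat.card M : ℝ)))) *
        ∑ t ∈ TM, ∑ y : Y,
          |inducedChannel W tH M t y - inducedChannel W tH M (ρ (t + d)) y|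
      ≤ (1 / (2 * ((Nat.card H : ℝ) / (Nat.card M : ℝ)))) *
          ((1 / (Nat.card M : ℝ)) * S) :=
        mul_le_mul_of_nonneg_left main (by positivity)
    _ ≤ (2 * (Fintype.card G : ℝ) /
          (((Nat.card H : ℝ) / (Nat.card M : ℝ)) * (Nat.card M : ℝ))) *
          ((1 / (2 * (Fintype.card G : ℝ))) * S) := by
        have hM' : (Nat.card M : ℝ) ≠ 0 := ne_of_gt hMpos
        have hH' : (Nat.card H : ℝ) ≠ 0 := ne_of_gt hHpos
        have hG' : (Fintype.card G : ℝ) ≠ 0 := ne_of_gt hGpos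
        have e1 : (1 / (2 * ((Nat.card H : ℝ) / (Nat.card M : ℝ)))) *
            ((1 / (Nat.card M : ℝ)) * S) = S / (2 * (Nat.card H : ℝ)) := by
          field_simp
        have e2 : (2 * (Fintype.card G : ℝ) /
            (((Nat.card H : ℝ) / (Nat.card M : ℝ)) * (Nat.card M : ℝ))) *
            ((1 / (2 * (Fintype.card G : ℝ))) * S) = S / (Nat.card H : ℝ) := by
          field_simp
        rw [e1, e2, div_le_div_iff₀ (by positivity) hHpos]
        nlinarith [hS0, hHpos]
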